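/- Let P : W → W be the orthogonal projection onto the orthogonal complement of range(Jz), and let Q : Y → Y be the orthogonal projection onto K. Then: (i) the linear map Y → W × Y given by y ↦ (P(Jy y), Q y) is injective; and (ii) for all x ∈ X and y ∈ Y, the element y is the unique solution of the system in statement 'there exists z with Jx x + Jy y + Jz z = 0 and y ∈ Kᗮ' if and only if P(Jy y) = −P(Jx x) and Q y = 0. (Coordinate-free form of Proposition 3.1: the matrix A = [Qᵀ Jy; Uyᵀ] has linearly independent columns and the derivative of the solution map solves A·DH = [−Qᵀ Jx; 0].) -/

import Mathlib

/-- Coordinate-free form of Proposition 3.1: with `P` the orthogonal projection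
onto `(range Jz)ᗮ` and `Q` the orthogonal projection onto `K`, the map
`y ↦ (P (Jy y), Q y)` is injective, and `y` solves the system
`∃ z, Jx x + Jy y + Jz z = 0 ∧ y ∈ Kᗮ` iff `P (Jy y) = -P (Jx x)` and
`Q y = 0`. -/
theorem stmt8 {X Y Z W : Type*}
    [NormedAddCommGroup X] [InnerProductSpace ℝ X] [FiniteDimensional ℝ X]
    [NormedAddCommGroup Y] [InnerProductSpace ℝ Y] [FiniteDimensional ℝ Y]
    [NormedAddCommGroup Z] [InnerProductSpace ℝ Z] [FiniteDimensional ℝ Z]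
    [NormedAddCommGroup W] [InnerProductSpace ℝ W] [FiniteDimensional ℝ W]
    (Jx : X →ₗ[ℝ] W) (Jy : Y →ₗ[ℝ] W) (Jz : Z →ₗ[ℝ] W)
    (hfeas : LinearMap.range Jx ≤ LinearMap.range Jy ⊔ LinearMap.range Jz)
    (K : Submodule ℝ Y)
    (hK : K = (LinearMap.ker (Jy.coprod Jz)).map (LinearMap.fst ℝ Y Z))
    (P : W →ₗ[ℝ] W)
    (hP : ∀ w : W, P w = (Submodule.orthogonalProjectionOnto ((LinearMap.range Jz)ᗮ) w : W))
    (Q : Y →ₗ[ℝ] Y)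
    (hQ : ∀ y : Y, Q y = (Submodule.orthogonalProjectionOnto K y : Y)) :
    Function.Injective (fun y : Y => (P (Jy y), Q y)) ∧
    ∀ (x : X) (y : Y),
      ((∃ z : Z, Jx x + Jy y + Jz z = 0) ∧ y ∈ Kᗮ) ↔
        (P (Jy y) = -P (Jx x) ∧ Q y = 0) := by

  -- `P w = 0` iff `w ∈ range Jz`
  have hP0 : ∀ w : W, P w = 0 ↔ w ∈ LinearMap.range Jz := by
    intro w
    rw [hP]
    rw [show ((Submodule.orthogonalProjectionOnto ((LinearMap.range Jz)ᗮ) w : W) = 0 ↔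
        Submodule.orthogonalProjectionOnto ((LinearMap.range Jz)ᗮ) w = 0) from by
      exact_mod_cast Iff.rfl]
    rw [Submodule.orthogonalProjectionOnto_eq_zero_iff,
      Submodule.orthogonal_orthogonal]
  have hQ0 : ∀ y : Y, Q y = 0 ↔ y ∈ Kᗮ := by
    intro y
    rw [hQ]
    rw [show ((Submodule.orthogonalProjectionOnto K y : Y) = 0 ↔
        Submodule.orthogonalProjectionOnto K y = 0) from by exact_mod_cast Iff.rfl]
    exact Submodule.orthogonalProjectionOnto_eq_zero_iff
  -- membership in K
  have hKmem : ∀ y : Y, y ∈ K ↔ ∃ z : Z, Jy y + Jz z = 0 := by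
    intro y
    rw [hK]
    constructor
    · rintro ⟨⟨y', z⟩, hmem, rfl⟩
      exact ⟨z, hmem⟩
    · rintro ⟨z, hz⟩
      exact ⟨⟨y, z⟩, hz, rfl⟩
  constructor
  · intro y y' h
    simp only [Prod.mk.injEq] at h
    have h1 : P (Jy (y - y')) = 0 := by
      rw [map_sub, map_sub, h.1, sub_self]
    have h2 : Q (y - y') = 0 := by
      rw [map_sub, h.2, sub_self]
    have hmemK : y - y' ∈ K := by
      rw [hP0] at h1
      obtain ⟨z, hz⟩ := h1
      exact (hKmem _).2 ⟨-z, by rw [map_neg, hz]; abel⟩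
    have hmemKo : y - y' ∈ Kᗮ := (hQ0 _).1 h2
    have : y - y' = 0 := by
      have := Submodule.inf_orthogonal_eq_bot K
      have hmem : y - y' ∈ K ⊓ Kᗮ := ⟨hmemK, hmemKo⟩
      rw [this] at hmem
      simpa using hmem
    exact sub_eq_zero.mp this
  · intro x y
    constructor
    · rintro ⟨⟨z, hz⟩, hy⟩
      refine ⟨?_, (hQ0 y).2 hy⟩
      have hsum : Jx x + Jy y = -Jz z := eq_neg_of_add_eq_zero_left hz
      have hyy : Jy y = -Jz z - Jx x := by rw [← hsum]; abel
      rw [hyy, map_sub, map_neg, (hP0 _).2 ⟨z, rfl⟩]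
      abel
    · rintro ⟨h1, h2⟩
      refine ⟨?_, (hQ0 y).1 h2⟩
      have : P (Jx x + Jy y) = 0 := by
        rw [map_add, h1]; abel
      rw [hP0] at this
      obtain ⟨z, hz⟩ := this
      exact ⟨-z, by rw [map_neg, ← hz]; abel⟩
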